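/- (Proposition 1, n = 2 odd factor.) For all real θ₅, θ₇, θ₁₁, θ₁₄, the matrix M₁ᵒ = P₍₂,₃₎ · exp((i·θ₅) • U₅) · exp((i·θ₇) • U₇) · exp((i·θ₁₁) • U₁₁) · exp((i·θ₁₄) • U₁₄) · P₍₂,₃₎ is 2×2-block-diagonal with SU(2) blocks. -/

import Mathlib

open Matrix Complex

noncomputable def U₁ : Matrix (Fin 4) (Fin 4) ℂ :=
  !![0, 1, 0, 0; 1, 0, 0, 0; 0, 0, 1, 0; 0, 0, 0, -1]

noncomputable def U₂ : Matrix (Fin 4) (Fin 4) ℂ :=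
  !![0, -I, 0, 0; I, 0, 0, 0; 0, 0, 1, 0; 0, 0, 0, -1]

noncomputable def U₃ : Matrix (Fin 4) (Fin 4) ℂ :=
  !![1, 0, 0, 0; 0, -1, 0, 0; 0, 0, 1, 0; 0, 0, 0, -1]

noncomputable def U₄ : Matrix (Fin 4) (Fin 4) ℂ :=
  !![1, 0, 0, 0; 0, 0, 1, 0; 0, 1, 0, 0; 0, 0, 0, -1]

noncomputable def U₅ : Matrix (Fin 4) (Fin 4) ℂ :=
  !![0, 0, 1, 0; 0, 1, 0, 0; 1, 0, 0, 0; 0, 0, 0, -1]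

noncomputable def U₆ : Matrix (Fin 4) (Fin 4) ℂ :=
  !![1, 0, 0, 0; 0, 0, -I, 0; 0, I, 0, 0; 0, 0, 0, -1]

noncomputable def U₇ : Matrix (Fin 4) (Fin 4) ℂ :=
  !![0, 0, -I, 0; 0, 1, 0, 0; I, 0, 0, 0; 0, 0, 0, -1]

noncomputable def U₈ : Matrix (Fin 4) (Fin 4) ℂ :=
  !![1, 0, 0, 0; 0, 1, 0, 0; 0, 0, -1, 0; 0, 0, 0, -1]

noncomputable def U₉ : Matrix (Fin 4) (Fin 4) ℂ :=
  !![1, 0, 0, 0; 0, -1, 0, 0; 0, 0, 0, 1; 0, 0, 1, 0]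

noncomputable def U₁₀ : Matrix (Fin 4) (Fin 4) ℂ :=
  !![0, 0, 0, 1; 0, -1, 0, 0; 0, 0, 1, 0; 1, 0, 0, 0]

noncomputable def U₁₁ : Matrix (Fin 4) (Fin 4) ℂ :=
  !![1, 0, 0, 0; 0, 0, 0, 1; 0, 0, -1, 0; 0, 1, 0, 0]

noncomputable def U₁₂ : Matrix (Fin 4) (Fin 4) ℂ :=
  !![1, 0, 0, 0; 0, -1, 0, 0; 0, 0, 0, -I; 0, 0, I, 0]

noncomputable def U₁₃ : Matrix (Fin 4) (Fin 4) ℂ :=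
  !![0, 0, 0, -I; 0, -1, 0, 0; 0, 0, 1, 0; I, 0, 0, 0]

noncomputable def U₁₄ : Matrix (Fin 4) (Fin 4) ℂ :=
  !![1, 0, 0, 0; 0, 0, 0, -I; 0, 0, -1, 0; 0, I, 0, 0]

noncomputable def U₁₅ : Matrix (Fin 4) (Fin 4) ℂ :=
  !![1, 0, 0, 0; 0, -1, 0, 0; 0, 0, -1, 0; 0, 0, 0, 1]

/-- 4×4 permutation matrix exchanging the 2nd and 4th standard basis vectors. -/
def P₂₄ : Matrix (Fin 4) (Fin 4) ℂ :=
  !![1, 0, 0, 0; 0, 0, 0, 1; 0, 0, 1, 0; 0, 1, 0, 0]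

/-- 4×4 permutation matrix exchanging the 2nd and 3rd standard basis vectors. -/
def P₂₃ : Matrix (Fin 4) (Fin 4) ℂ :=
  !![1, 0, 0, 0; 0, 0, 1, 0; 0, 1, 0, 0; 0, 0, 0, 1]

/-- The top-left 2×2 block of a 4×4 matrix. -/
noncomputable def topBlock (M : Matrix (Fin 4) (Fin 4) ℂ) : Matrix (Fin 2) (Fin 2) ℂ :=
  !![M 0 0, M 0 1; M 1 0, M 1 1]

/-- The bottom-right 2×2 block of a 4×4 matrix. -/
noncomputable def botBlock (M : Matrix (Fin 4) (Fin 4) ℂ) : Matrix (Fin 2) (Fin 2) ℂ :=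
  !![M 2 2, M 2 3; M 3 2, M 3 3]

/-- A 2×2 complex matrix is special unitary. -/
def IsSU2 (A : Matrix (Fin 2) (Fin 2) ℂ) : Prop :=
  A * Aᴴ = 1 ∧ Aᴴ * A = 1 ∧ A.det = 1

/-- A 4×4 complex matrix is 2×2-block-diagonal with SU(2) blocks: every entry whose
row index and column index lie on opposite sides of the 2|2 partition vanishes, and
both 2×2 diagonal blocks are unitary with determinant 1. -/
def IsBlockDiagSU2 (M : Matrix (Fin 4) (Fin 4) ℂ) : Prop :=
  (∀ i j : Fin 4,
      (((i : ℕ) < 2 ∧ ¬ (j : ℕ) < 2) ∨ (¬ (i : ℕ) < 2 ∧ (j : ℕ) < 2)) → M i j = 0) ∧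
  IsSU2 (topBlock M) ∧ IsSU2 (botBlock M)

/- AUX START -/
section Aux

lemma zeros_of (M : Matrix (Fin 4) (Fin 4) ℂ) (h02 : M 0 2 = 0) (h03 : M 0 3 = 0)
    (h12 : M 1 2 = 0) (h13 : M 1 3 = 0) (h20 : M 2 0 = 0) (h21 : M 2 1 = 0)
    (h30 : M 3 0 = 0) (h31 : M 3 1 = 0) :
    ∀ i j : Fin 4,
      (((i : ℕ) < 2 ∧ ¬ (j : ℕ) < 2) ∨ (¬ (i : ℕ) < 2 ∧ (j : ℕ) < 2)) → M i j = 0 := by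
  intro i j hij
  fin_cases i <;> fin_cases j <;>
    first
      | assumption
      | (exfalso; revert hij; decide)

lemma isSU2_mul {A B : Matrix (Fin 2) (Fin 2) ℂ} (hA : IsSU2 A) (hB : IsSU2 B) :
    IsSU2 (A * B) := by
  obtain ⟨hA1, hA2, hA3⟩ := hA
  obtain ⟨hB1, hB2, hB3⟩ := hB
  refine ⟨?_, ?_, ?_⟩
  · rw [conjTranspose_mul, mul_assoc, ← mul_assoc B, hB1, one_mul, hA1]
  · rw [conjTranspose_mul, mul_assoc, ← mul_assoc Aᴴ, hA2, one_mul, hB2]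
  · rw [det_mul, hA3, hB3, one_mul]

lemma blockdiag_mul {M N : Matrix (Fin 4) (Fin 4) ℂ}
    (hM : IsBlockDiagSU2 M) (hN : IsBlockDiagSU2 N) : IsBlockDiagSU2 (M * N) := by
  obtain ⟨hMz, hMt, hMb⟩ := hM
  obtain ⟨hNz, hNt, hNb⟩ := hN
  have m02 := hMz 0 2 (by decide); have m03 := hMz 0 3 (by decide)
  have m12 := hMz 1 2 (by decide); have m13 := hMz 1 3 (by decide)
  have m20 := hMz 2 0 (by decide); have m21 := hMz 2 1 (by decide)
  have m30 := hMz 3 0 (by decide); have m31 := hMz 3 1 (by decide)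
  have n02 := hNz 0 2 (by decide); have n03 := hNz 0 3 (by decide)
  have n12 := hNz 1 2 (by decide); have n13 := hNz 1 3 (by decide)
  have n20 := hNz 2 0 (by decide); have n21 := hNz 2 1 (by decide)
  have n30 := hNz 3 0 (by decide); have n31 := hNz 3 1 (by decide)
  have htop : topBlock (M * N) = topBlock M * topBlock N := by
    ext i j
    fin_cases i <;> fin_cases j <;>
      simp [topBlock, Matrix.mul_apply, Fin.sum_univ_four, Fin.sum_univ_two,
        m02, m03, m12, m13, n20, n21, n30, n31]
  have hbot : botBlock (M * N) = botBlock M * botBlock N := by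
    ext i j
    fin_cases i <;> fin_cases j <;>
      simp [botBlock, Matrix.mul_apply, Fin.sum_univ_four, Fin.sum_univ_two,
        m20, m21, m30, m31, n02, n03, n12, n13]
  refine ⟨zeros_of _ ?_ ?_ ?_ ?_ ?_ ?_ ?_ ?_, ?_, ?_⟩
  · simp [Matrix.mul_apply, Fin.sum_univ_four, m02, m03, n02, n12]
  · simp [Matrix.mul_apply, Fin.sum_univ_four, m02, m03, n03, n13]
  · simp [Matrix.mul_apply, Fin.sum_univ_four, m12, m13, n02, n12]
  · simp [Matrix.mul_apply, Fin.sum_univ_four, m12, m13, n03, n13]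
  · simp [Matrix.mul_apply, Fin.sum_univ_four, m20, m21, n20, n30]
  · simp [Matrix.mul_apply, Fin.sum_univ_four, m20, m21, n21, n31]
  · simp [Matrix.mul_apply, Fin.sum_univ_four, m30, m31, n20, n30]
  · simp [Matrix.mul_apply, Fin.sum_univ_four, m30, m31, n21, n31]
  · rw [htop]; exact isSU2_mul hMt hNt
  · rw [hbot]; exact isSU2_mul hMb hNb

lemma su2_x {a b : ℂ} (ha : (starRingEnd ℂ) a = a) (hb : (starRingEnd ℂ) b = b)
    (h : a ^ 2 + b ^ 2 = 1) : IsSU2 !![a, I * b; I * b, a] := by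
  refine ⟨?_, ?_, ?_⟩ <;>
    [(ext i j; fin_cases i <;> fin_cases j); (ext i j; fin_cases i <;> fin_cases j);
      rw [Matrix.det_fin_two]] <;>
    simp [Matrix.mul_apply, Fin.sum_univ_two, Matrix.conjTranspose_apply, Matrix.one_apply,
      _root_.map_mul, Complex.conj_I, ha, hb] <;>
    first
      | linear_combination (norm := ring1!) h - Complex.I_sq * b ^ 2
      | linear_combination (norm := ring1!) -h + Complex.I_sq * b ^ 2
      | linear_combination (norm := ring1!) h
      | linear_combination (norm := ring1!) -h
      | ring1!

lemma su2_y {a b : ℂ} (ha : (starRingEnd ℂ) a = a) (hb : (starRingEnd ℂ) b = b)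
    (h : a ^ 2 + b ^ 2 = 1) : IsSU2 !![a, b; -b, a] := by
  refine ⟨?_, ?_, ?_⟩ <;>
    [(ext i j; fin_cases i <;> fin_cases j); (ext i j; fin_cases i <;> fin_cases j);
      rw [Matrix.det_fin_two]] <;>
    simp [Matrix.mul_apply, Fin.sum_univ_two, Matrix.conjTranspose_apply, Matrix.one_apply,
      _root_.map_mul, map_neg, ha, hb] <;>
    first
      | linear_combination (norm := ring1!) h
      | linear_combination (norm := ring1!) -h
      | ring1!

lemma su2_z {a b : ℂ} (ha : (starRingEnd ℂ) a = a) (hb : (starRingEnd ℂ) b = b)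
    (h : a ^ 2 + b ^ 2 = 1) : IsSU2 !![a + I * b, 0; 0, a - I * b] := by
  refine ⟨?_, ?_, ?_⟩ <;>
    [(ext i j; fin_cases i <;> fin_cases j); (ext i j; fin_cases i <;> fin_cases j);
      rw [Matrix.det_fin_two]] <;>
    simp [Matrix.mul_apply, Fin.sum_univ_two, Matrix.conjTranspose_apply, Matrix.one_apply,
      _root_.map_mul, map_add, map_sub, Complex.conj_I, ha, hb] <;>
    first
      | linear_combination (norm := ring1!) h - Complex.I_sq * b ^ 2
      | linear_combination (norm := ring1!) -h + Complex.I_sq * b ^ 2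
      | linear_combination (norm := ring1!) h
      | linear_combination (norm := ring1!) -h
      | ring1!

lemma key_cs (θ : ℝ) : (Real.cos θ : ℂ) ^ 2 + (Real.sin θ : ℂ) ^ 2 = 1 := by
  norm_cast
  exact Real.cos_sq_add_sin_sq θ

set_option maxHeartbeats 1000000 in
lemma exp_smul_inv (θ : ℝ) (U : Matrix (Fin 4) (Fin 4) ℂ) (h : U * U = 1) :
    NormedSpace.exp ((I * (θ : ℂ)) • U)
      = ((Real.cos θ : ℂ)) • (1 : Matrix (Fin 4) (Fin 4) ℂ)
        + (I * (Real.sin θ : ℂ)) • U := by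
  have hU2 : U ^ 2 = 1 := by rw [sq]; exact h
  rw [NormedSpace.exp_eq_tsum ℂ]
  refine HasSum.tsum_eq ?_
  have heven : HasSum (fun k : ℕ => ((Nat.factorial (2*k) : ℂ)⁻¹) • ((I * (θ:ℂ)) • U) ^ (2*k))
      (((Real.cos θ : ℂ)) • (1 : Matrix (Fin 4) (Fin 4) ℂ)) := by
    have h1 := (Complex.hasSum_cos (θ : ℂ)).smul_const (1 : Matrix (Fin 4) (Fin 4) ℂ)
    rw [Complex.ofReal_cos]
    convert h1 using 2 with k
    rw [smul_pow, pow_mul U 2 k, hU2, one_pow, smul_smul]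
    congr 1
    rw [mul_pow, pow_mul, Complex.I_sq]
    field_simp
  have hodd : HasSum (fun k : ℕ => ((Nat.factorial (2*k+1) : ℂ)⁻¹) • ((I * (θ:ℂ)) • U) ^ (2*k+1))
      ((I * (Real.sin θ : ℂ)) • U) := by
    have h1 := ((Complex.hasSum_sin (θ : ℂ)).mul_left I).smul_const U
    rw [Complex.ofReal_sin]
    convert h1 using 2 with k
    rw [smul_pow, pow_succ U, pow_mul U 2 k, hU2, one_pow, one_mul, smul_smul]
    congr 1
    rw [pow_succ, mul_pow, pow_mul, Complex.I_sq]
    field_simp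
    ring
  exact heven.even_add_odd hodd

lemma U₅_inv : U₅ * U₅ = 1 := by
  ext i j
  fin_cases i <;> fin_cases j <;>
    simp [U₅, Matrix.mul_apply, Matrix.vecMul, dotProduct, Fin.sum_univ_four,
      Matrix.one_apply, Matrix.add_apply, Matrix.smul_apply, Matrix.vecHead, Matrix.vecTail]

lemma U₇_inv : U₇ * U₇ = 1 := by
  ext i j
  fin_cases i <;> fin_cases j <;>
    simp [U₇, Complex.I_mul_I, Matrix.mul_apply, Matrix.vecMul, dotProduct, Fin.sum_univ_four,
      Matrix.one_apply, Matrix.add_apply, Matrix.smul_apply, Matrix.vecHead, Matrix.vecTail]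

lemma U₁₁_inv : U₁₁ * U₁₁ = 1 := by
  ext i j
  fin_cases i <;> fin_cases j <;>
    simp [U₁₁, Matrix.mul_apply, Matrix.vecMul, dotProduct, Fin.sum_univ_four,
      Matrix.one_apply, Matrix.add_apply, Matrix.smul_apply, Matrix.vecHead, Matrix.vecTail]

lemma U₁₄_inv : U₁₄ * U₁₄ = 1 := by
  ext i j
  fin_cases i <;> fin_cases j <;>
    simp [U₁₄, Complex.I_mul_I, Matrix.mul_apply, Matrix.vecMul, dotProduct, Fin.sum_univ_four,
      Matrix.one_apply, Matrix.add_apply, Matrix.smul_apply, Matrix.vecHead, Matrix.vecTail]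

lemma conj₅ (θ : ℝ) :
    P₂₃ * (((Real.cos θ : ℂ)) • (1 : Matrix (Fin 4) (Fin 4) ℂ)
        + (I * (Real.sin θ : ℂ)) • U₅) * P₂₃ =
    !![(Real.cos θ : ℂ), I * (Real.sin θ : ℂ), 0, 0;
       I * (Real.sin θ : ℂ), (Real.cos θ : ℂ), 0, 0;
       0, 0, (Real.cos θ : ℂ) + I * (Real.sin θ : ℂ), 0;
       0, 0, 0, (Real.cos θ : ℂ) - I * (Real.sin θ : ℂ)] := by
  ext i j
  fin_cases i <;> fin_cases j <;>
    simp [P₂₃, U₅, Matrix.mul_apply, Matrix.vecMul, dotProduct, Fin.sum_univ_four,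
      Matrix.one_apply, Matrix.add_apply, Matrix.smul_apply, Matrix.vecHead, Matrix.vecTail] <;> ring

lemma conj₇ (θ : ℝ) :
    P₂₃ * (((Real.cos θ : ℂ)) • (1 : Matrix (Fin 4) (Fin 4) ℂ)
        + (I * (Real.sin θ : ℂ)) • U₇) * P₂₃ =
    !![(Real.cos θ : ℂ), (Real.sin θ : ℂ), 0, 0;
       -(Real.sin θ : ℂ), (Real.cos θ : ℂ), 0, 0;
       0, 0, (Real.cos θ : ℂ) + I * (Real.sin θ : ℂ), 0;
       0, 0, 0, (Real.cos θ : ℂ) - I * (Real.sin θ : ℂ)] := by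
  ext i j
  fin_cases i <;> fin_cases j <;>
    simp [P₂₃, U₇, Matrix.mul_apply, Matrix.vecMul, dotProduct, Fin.sum_univ_four,
      Matrix.one_apply, Matrix.add_apply, Matrix.smul_apply, Matrix.vecHead, Matrix.vecTail] <;>
    (first
      | ring1!
      | linear_combination (norm := ring1!) -Complex.sin (θ:ℂ) * Complex.I_mul_I
      | linear_combination (norm := ring1!) Complex.sin (θ:ℂ) * Complex.I_mul_I)

lemma conj₁₁ (θ : ℝ) :
    P₂₃ * (((Real.cos θ : ℂ)) • (1 : Matrix (Fin 4) (Fin 4) ℂ)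
        + (I * (Real.sin θ : ℂ)) • U₁₁) * P₂₃ =
    !![(Real.cos θ : ℂ) + I * (Real.sin θ : ℂ), 0, 0, 0;
       0, (Real.cos θ : ℂ) - I * (Real.sin θ : ℂ), 0, 0;
       0, 0, (Real.cos θ : ℂ), I * (Real.sin θ : ℂ);
       0, 0, I * (Real.sin θ : ℂ), (Real.cos θ : ℂ)] := by
  ext i j
  fin_cases i <;> fin_cases j <;>
    simp [P₂₃, U₁₁, Matrix.mul_apply, Matrix.vecMul, dotProduct, Fin.sum_univ_four,
      Matrix.one_apply, Matrix.add_apply, Matrix.smul_apply, Matrix.vecHead, Matrix.vecTail] <;> ring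

lemma conj₁₄ (θ : ℝ) :
    P₂₃ * (((Real.cos θ : ℂ)) • (1 : Matrix (Fin 4) (Fin 4) ℂ)
        + (I * (Real.sin θ : ℂ)) • U₁₄) * P₂₃ =
    !![(Real.cos θ : ℂ) + I * (Real.sin θ : ℂ), 0, 0, 0;
       0, (Real.cos θ : ℂ) - I * (Real.sin θ : ℂ), 0, 0;
       0, 0, (Real.cos θ : ℂ), (Real.sin θ : ℂ);
       0, 0, -(Real.sin θ : ℂ), (Real.cos θ : ℂ)] := by
  ext i j
  fin_cases i <;> fin_cases j <;>
    simp [P₂₃, U₁₄, Matrix.mul_apply, Matrix.vecMul, dotProduct, Fin.sum_univ_four,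
      Matrix.one_apply, Matrix.add_apply, Matrix.smul_apply, Matrix.vecHead, Matrix.vecTail] <;>
    (first
      | ring1!
      | linear_combination (norm := ring1!) -Complex.sin (θ:ℂ) * Complex.I_mul_I
      | linear_combination (norm := ring1!) Complex.sin (θ:ℂ) * Complex.I_mul_I)

lemma factor₅ (θ : ℝ) : IsBlockDiagSU2 (P₂₃ * NormedSpace.exp ((I * (θ : ℂ)) • U₅) * P₂₃) := by
  rw [exp_smul_inv θ U₅ U₅_inv, conj₅]
  refine ⟨zeros_of _ (by simp [Matrix.vecHead, Matrix.vecTail]) (by simp [Matrix.vecHead, Matrix.vecTail]) (by simp [Matrix.vecHead, Matrix.vecTail]) (by simp [Matrix.vecHead, Matrix.vecTail])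
    (by simp [Matrix.vecHead, Matrix.vecTail]) (by simp [Matrix.vecHead, Matrix.vecTail]) (by simp [Matrix.vecHead, Matrix.vecTail]) (by simp [Matrix.vecHead, Matrix.vecTail]), ?_, ?_⟩
  · have := su2_x (a := (Real.cos θ : ℂ)) (b := (Real.sin θ : ℂ))
      (Complex.conj_ofReal _) (Complex.conj_ofReal _) (key_cs θ)
    convert this using 1
    all_goals
      ext i j
      fin_cases i <;> fin_cases j <;> simp [topBlock, Matrix.vecHead, Matrix.vecTail]
  · have := su2_z (a := (Real.cos θ : ℂ)) (b := (Real.sin θ : ℂ))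
      (Complex.conj_ofReal _) (Complex.conj_ofReal _) (key_cs θ)
    convert this using 1
    all_goals
      ext i j
      fin_cases i <;> fin_cases j <;> simp [botBlock, Matrix.vecHead, Matrix.vecTail]

lemma factor₇ (θ : ℝ) : IsBlockDiagSU2 (P₂₃ * NormedSpace.exp ((I * (θ : ℂ)) • U₇) * P₂₃) := by
  rw [exp_smul_inv θ U₇ U₇_inv, conj₇]
  refine ⟨zeros_of _ (by simp [Matrix.vecHead, Matrix.vecTail]) (by simp [Matrix.vecHead, Matrix.vecTail]) (by simp [Matrix.vecHead, Matrix.vecTail]) (by simp [Matrix.vecHead, Matrix.vecTail])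
    (by simp [Matrix.vecHead, Matrix.vecTail]) (by simp [Matrix.vecHead, Matrix.vecTail]) (by simp [Matrix.vecHead, Matrix.vecTail]) (by simp [Matrix.vecHead, Matrix.vecTail]), ?_, ?_⟩
  · have := su2_y (a := (Real.cos θ : ℂ)) (b := (Real.sin θ : ℂ))
      (Complex.conj_ofReal _) (Complex.conj_ofReal _) (key_cs θ)
    convert this using 1
    all_goals
      ext i j
      fin_cases i <;> fin_cases j <;> simp [topBlock, Matrix.vecHead, Matrix.vecTail]
  · have := su2_z (a := (Real.cos θ : ℂ)) (b := (Real.sin θ : ℂ))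
      (Complex.conj_ofReal _) (Complex.conj_ofReal _) (key_cs θ)
    convert this using 1
    all_goals
      ext i j
      fin_cases i <;> fin_cases j <;> simp [botBlock, Matrix.vecHead, Matrix.vecTail]

lemma factor₁₁ (θ : ℝ) : IsBlockDiagSU2 (P₂₃ * NormedSpace.exp ((I * (θ : ℂ)) • U₁₁) * P₂₃) := by
  rw [exp_smul_inv θ U₁₁ U₁₁_inv, conj₁₁]
  refine ⟨zeros_of _ (by simp [Matrix.vecHead, Matrix.vecTail]) (by simp [Matrix.vecHead, Matrix.vecTail]) (by simp [Matrix.vecHead, Matrix.vecTail]) (by simp [Matrix.vecHead, Matrix.vecTail])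
    (by simp [Matrix.vecHead, Matrix.vecTail]) (by simp [Matrix.vecHead, Matrix.vecTail]) (by simp [Matrix.vecHead, Matrix.vecTail]) (by simp [Matrix.vecHead, Matrix.vecTail]), ?_, ?_⟩
  · have := su2_z (a := (Real.cos θ : ℂ)) (b := (Real.sin θ : ℂ))
      (Complex.conj_ofReal _) (Complex.conj_ofReal _) (key_cs θ)
    convert this using 1
    all_goals
      ext i j
      fin_cases i <;> fin_cases j <;> simp [topBlock, Matrix.vecHead, Matrix.vecTail]
  · have := su2_x (a := (Real.cos θ : ℂ)) (b := (Real.sin θ : ℂ))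
      (Complex.conj_ofReal _) (Complex.conj_ofReal _) (key_cs θ)
    convert this using 1
    all_goals
      ext i j
      fin_cases i <;> fin_cases j <;> simp [botBlock, Matrix.vecHead, Matrix.vecTail]

lemma factor₁₄ (θ : ℝ) : IsBlockDiagSU2 (P₂₃ * NormedSpace.exp ((I * (θ : ℂ)) • U₁₄) * P₂₃) := by
  rw [exp_smul_inv θ U₁₄ U₁₄_inv, conj₁₄]
  refine ⟨zeros_of _ (by simp [Matrix.vecHead, Matrix.vecTail]) (by simp [Matrix.vecHead, Matrix.vecTail]) (by simp [Matrix.vecHead, Matrix.vecTail]) (by simp [Matrix.vecHead, Matrix.vecTail])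
    (by simp [Matrix.vecHead, Matrix.vecTail]) (by simp [Matrix.vecHead, Matrix.vecTail]) (by simp [Matrix.vecHead, Matrix.vecTail]) (by simp [Matrix.vecHead, Matrix.vecTail]), ?_, ?_⟩
  · have := su2_z (a := (Real.cos θ : ℂ)) (b := (Real.sin θ : ℂ))
      (Complex.conj_ofReal _) (Complex.conj_ofReal _) (key_cs θ)
    convert this using 1
    all_goals
      ext i j
      fin_cases i <;> fin_cases j <;> simp [topBlock, Matrix.vecHead, Matrix.vecTail]
  · have := su2_y (a := (Real.cos θ : ℂ)) (b := (Real.sin θ : ℂ))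
      (Complex.conj_ofReal _) (Complex.conj_ofReal _) (key_cs θ)
    convert this using 1
    all_goals
      ext i j
      fin_cases i <;> fin_cases j <;> simp [botBlock, Matrix.vecHead, Matrix.vecTail]

lemma P₂₃_sq : P₂₃ * P₂₃ = 1 := by
  ext i j
  fin_cases i <;> fin_cases j <;>
    simp [P₂₃, Matrix.mul_apply, Matrix.vecMul, dotProduct, Fin.sum_univ_four,
      Matrix.one_apply, Matrix.add_apply, Matrix.smul_apply, Matrix.vecHead, Matrix.vecTail]

end Aux
/- AUX END -/

theorem M1_odd_blockDiag_SU2 (θ₅ θ₇ θ₁₁ θ₁₄ : ℝ) :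
    IsBlockDiagSU2
      (P₂₃ * NormedSpace.exp ((I * (θ₅ : ℂ)) • U₅)
           * NormedSpace.exp ((I * (θ₇ : ℂ)) • U₇)
           * NormedSpace.exp ((I * (θ₁₁ : ℂ)) • U₁₁)
           * NormedSpace.exp ((I * (θ₁₄ : ℂ)) • U₁₄) * P₂₃) :=
  by
  have hPP : ∀ X : Matrix (Fin 4) (Fin 4) ℂ, P₂₃ * (P₂₃ * X) = X := by
    intro X
    rw [← Matrix.mul_assoc, P₂₃_sq, Matrix.one_mul]
  have key : P₂₃ * NormedSpace.exp ((I * (θ₅ : ℂ)) • U₅)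
           * NormedSpace.exp ((I * (θ₇ : ℂ)) • U₇)
           * NormedSpace.exp ((I * (θ₁₁ : ℂ)) • U₁₁)
           * NormedSpace.exp ((I * (θ₁₄ : ℂ)) • U₁₄) * P₂₃
      = (P₂₃ * NormedSpace.exp ((I * (θ₅ : ℂ)) • U₅) * P₂₃)
        * (P₂₃ * NormedSpace.exp ((I * (θ₇ : ℂ)) • U₇) * P₂₃)
        * (P₂₃ * NormedSpace.exp ((I * (θ₁₁ : ℂ)) • U₁₁) * P₂₃)
        * (P₂₃ * NormedSpace.exp ((I * (θ₁₄ : ℂ)) • U₁₄) * P₂₃) := by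
    simp only [Matrix.mul_assoc, hPP]
  rw [key]
  exact blockdiag_mul (blockdiag_mul (blockdiag_mul (factor₅ θ₅) (factor₇ θ₇))
    (factor₁₁ θ₁₁)) (factor₁₄ θ₁₄)
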